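/- There is no symmetric psd-decomposition of W_3 of size 2: if A_0, A_1 ∈ M_2(ℂ) are psd and W_{j_1 j_2 j_3} = ∑_{α,β=1}^2 (A_{j_1})_{αβ}(A_{j_2})_{αβ}(A_{j_3})_{αβ} for all j_i ∈ {0,1}, then a contradiction follows; in particular both A_0 and A_1 must have rank ≤ 1, and the vanishing of W_{000} and W_{111} forces all entries of W to vanish. -/

import Mathlib

open scoped ComplexOrder

/-- The tripartite W-state. -/
noncomputable def Wstate3 : (Fin 3 → Fin 2) → ℂ := fun j =>
  if (Finset.univ.filter (fun i => j i = 1)).card = 1 then 1 else 0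

lemma keyR (p r t c : ℝ) (hp : 0 ≤ p) (hr : 0 ≤ r) (ht : 0 ≤ t)
    (hdet : t^2 ≤ p*r) (hc : c^2 ≤ t^6) (heq : p^3 + r^3 + 2*c = 0) :
    p = r ∧ t = p ∧ c = -p^3 := by
  have h1 : -t^3 ≤ c := by nlinarith [pow_nonneg ht 3, sq_nonneg (c + t^3)]
  have hprt : 2*t ≤ p + r := by
    nlinarith [sq_nonneg (p-r), mul_nonneg (add_nonneg hp hr) ht]
  have s1 : 0 ≤ (p+r)*(p-r)^2 := mul_nonneg (by linarith) (sq_nonneg _)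
  have s2 : 0 ≤ (p*r - t^2)*(p+r) := mul_nonneg (by linarith) (by linarith)
  have s3 : 0 ≤ t^2*(p+r-2*t) := mul_nonneg (sq_nonneg _) (by linarith)
  have hsum : (p+r)*(p-r)^2 + (p*r - t^2)*(p+r) + t^2*(p+r-2*t) = p^3 + r^3 - 2*t^3 := by ring
  have hle : p^3 + r^3 ≤ 2*t^3 := by linarith
  have e1 : (p+r)*(p-r)^2 = 0 := by nlinarith
  have e2 : (p*r - t^2)*(p+r) = 0 := by nlinarith
  rcases eq_or_lt_of_le (by linarith : (0:ℝ) ≤ p + r) with h0 | h0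
  · have hp0 : p = 0 := by linarith
    have hr0 : r = 0 := by linarith
    have ht0 : t = 0 := by nlinarith
    have hc0 : c = 0 := by nlinarith
    exact ⟨by rw [hp0, hr0], by rw [ht0, hp0], by rw [hc0, hp0]; ring⟩
  · have hpr : p = r := by
      rcases mul_eq_zero.mp e1 with h | h
      · linarith
      · have := sq_eq_zero_iff.mp h; linarith
    subst hpr
    have hprt2 : p*p = t^2 := by
      rcases mul_eq_zero.mp e2 with h | h
      · linarith
      · linarith
    have htp : t = p := by
      have h4 : (t-p)*(t+p) = 0 := by nlinarith
      rcases mul_eq_zero.mp h4 with h | h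
      · linarith
      · linarith
    subst htp
    exact ⟨rfl, rfl, by linarith⟩

lemma re_eq_neg_abs {z : ℂ} (h : z.re = -‖z‖) : z = -((‖z‖ : ℝ) : ℂ) := by
  have h1 : ‖z‖ ^ 2 = z.re^2 + z.im^2 := by
    rw [Complex.sq_norm, Complex.normSq_apply]; ring
  have h3 : z.re^2 = (‖z‖)^2 := by rw [h]; ring
  have h2 : z.im = 0 := by
    have : z.im^2 = 0 := by linarith
    exact pow_eq_zero_iff (by norm_num) |>.mp this
  apply Complex.ext <;> simp [h, h2]

lemma cube_structure (M : Matrix (Fin 2) (Fin 2) ℂ) (hM : M.PosSemidef)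
    (h : M 0 0 * M 0 0 * M 0 0 + M 0 1 * M 0 1 * M 0 1 +
      (M 1 0 * M 1 0 * M 1 0 + M 1 1 * M 1 1 * M 1 1) = 0) :
    ∃ P : ℝ, 0 ≤ P ∧ M 0 0 = (P : ℂ) ∧ M 1 1 = (P : ℂ) ∧
      M 1 0 = (starRingEnd ℂ) (M 0 1) ∧ ‖M 0 1‖ = P ∧
      (M 0 1)^3 = -((P : ℂ))^3 := by
  have hherm : M 1 0 = (starRingEnd ℂ) (M 0 1) := by
    have := congrFun (congrFun hM.1 1) 0
    simpa [Matrix.conjTranspose_apply] using this.symm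
  have hd0 : 0 ≤ M 0 0 := by
    have := hM.dotProduct_mulVec_nonneg (Pi.single 0 1)
    simpa [Matrix.mulVec, dotProduct, Fin.sum_univ_two, Pi.single_apply] using this
  have hd1 : 0 ≤ M 1 1 := by
    have := hM.dotProduct_mulVec_nonneg (Pi.single 1 1)
    simpa [Matrix.mulVec, dotProduct, Fin.sum_univ_two, Pi.single_apply] using this
  rw [Complex.le_def] at hd0 hd1
  set P := (M 0 0).re with hP
  set R := (M 1 1).re with hR
  have hM00 : M 0 0 = (P : ℂ) := by apply Complex.ext <;> simp [hP, ← hd0.2]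
  have hM11 : M 1 1 = (R : ℂ) := by apply Complex.ext <;> simp [hR, ← hd1.2]
  set q := M 0 1 with hqdef
  set t := ‖q‖ with htdef
  set c := (q^3).re with hcdef
  have hdetnn : (0:ℝ) ≤ ∏ i, hM.1.eigenvalues i :=
    Finset.prod_nonneg fun i _ => hM.eigenvalues_nonneg i
  have hdet : t^2 ≤ P * R := by
    have hdc : M.det = ((∏ i, hM.1.eigenvalues i : ℝ) : ℂ) := by
      rw [hM.1.det_eq_prod_eigenvalues]; push_cast; rfl
    rw [Matrix.det_fin_two, hM00, hM11, hherm, Complex.mul_conj] at hdc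
    have hre : P * R - Complex.normSq q = ∏ i, hM.1.eigenvalues i := by
      exact_mod_cast hdc
    have hns : Complex.normSq q = t^2 := (Complex.sq_norm q).symm
    nlinarith [hdetnn]
  have habs3 : ‖q^3‖ = t^3 := by rw [norm_pow]
  have hc : c^2 ≤ t^6 := by
    have h5 : |c| ≤ t^3 := by rw [← habs3]; exact Complex.abs_re_le_norm _
    have h6 := abs_le.mp h5
    nlinarith [h6.1, h6.2]
  have heqR : P^3 + R^3 + 2*c = 0 := by
    rw [hM00, hM11, hherm] at h
    have hac : q ^ 3 + ((starRingEnd ℂ) q) ^ 3 = ((2 * (q^3).re : ℝ) : ℂ) := by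
      rw [← map_pow]; exact Complex.add_conj _
    have h' : ((P^3 + R^3 + 2*c : ℝ) : ℂ) = 0 := by
      push_cast
      push_cast at hac
      linear_combination h - hac
    exact_mod_cast h'
  have hP0 : 0 ≤ P := by simpa using hd0.1
  have hR0 : 0 ≤ R := by simpa using hd1.1
  obtain ⟨e1, e2, e3⟩ := keyR P R t c hP0 hR0 (norm_nonneg q) hdet hc heqR
  refine ⟨P, hP0, hM00, by rw [hM11, ← e1], hherm, e2, ?_⟩
  have h7 : (q^3).re = -‖q^3‖ := by rw [habs3, ← hcdef, e3, e2]
  have := re_eq_neg_abs h7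
  rw [habs3, e2] at this
  rw [this]; push_cast; ring

theorem no_symmetric_psd_decomposition_W3_size_two
    (A : Fin 2 → Matrix (Fin 2) (Fin 2) ℂ) (hA : ∀ j, (A j).PosSemidef)
    (hdec : ∀ j : Fin 3 → Fin 2,
      Wstate3 j = ∑ α : Fin 2, ∑ β : Fin 2, ∏ i, A (j i) α β) : False := by
  have e000 := hdec ![0,0,0]
  have e001 := hdec ![0,0,1]
  have e011 := hdec ![0,1,1]
  have e111 := hdec ![1,1,1]
  rw [show Wstate3 ![0,0,0] = 0 by simp [Wstate3]; decide] at e000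
  rw [show Wstate3 ![0,0,1] = 1 by simp [Wstate3]; decide] at e001
  rw [show Wstate3 ![0,1,1] = 0 by simp [Wstate3]; decide] at e011
  rw [show Wstate3 ![1,1,1] = 0 by simp [Wstate3]; decide] at e111
  simp only [Fin.sum_univ_two, Fin.prod_univ_three, Matrix.cons_val_zero, Matrix.cons_val_one,
    Matrix.head_cons, Matrix.cons_val_two, Matrix.tail_cons] at e000 e001 e011 e111
  obtain ⟨P, hP0, h00, h11, hherm0, habs0, hcube0⟩ := cube_structure (A 0) (hA 0) e000.symm
  obtain ⟨Q, hQ0, g00, g11, hherm1, habs1, hcube1⟩ := cube_structure (A 1) (hA 1) e111.symm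
  set q := A 0 0 1 with hqdef
  set q' := A 1 0 1 with hq'def
  rcases eq_or_lt_of_le hP0 with hP | hP
  · -- P = 0 : A 0 = 0, contradiction with e001
    have hq0 : q = 0 := by
      have : ‖q‖ = 0 := by rw [habs0, ← hP]
      exact norm_eq_zero.mp this
    rw [h00, h11, hherm0, hq0, ← hP] at e001
    simp at e001
  rcases eq_or_lt_of_le hQ0 with hQ | hQ
  · have hq'0 : q' = 0 := by
      have : ‖q'‖ = 0 := by rw [habs1, ← hQ]
      exact norm_eq_zero.mp this
    rw [g00, g11, hherm1, hq'0, ← hQ] at e001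
    simp at e001
  rw [h00, h11, g00, g11, hherm0, hherm1] at e001 e011
  -- e011 gives d := q*q'^2 real negative
  have hadd : q*q'^2 + (starRingEnd ℂ) q * ((starRingEnd ℂ) q')^2 = ((2*(q*q'^2).re : ℝ) : ℂ) := by
    rw [show (starRingEnd ℂ) q * ((starRingEnd ℂ) q')^2 = (starRingEnd ℂ) (q*q'^2) by
      rw [map_mul, map_pow]]
    exact Complex.add_conj _
  have hdre : (q*q'^2).re = -(P*Q^2) := by
    have h' : ((2*(P*Q^2) + 2*(q*q'^2).re : ℝ) : ℂ) = 0 := by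
      push_cast
      push_cast at hadd
      linear_combination -e011 - hadd
    have : 2*(P*Q^2) + 2*(q*q'^2).re = 0 := by exact_mod_cast h'
    linarith
  have habsd : ‖q*q'^2‖ = P*Q^2 := by
    rw [norm_mul, norm_pow, habs0, habs1]
  have hd_eq : q*q'^2 = -((P*Q^2 : ℝ) : ℂ) := by
    have h7 : (q*q'^2).re = -‖q*q'^2‖ := by rw [habsd, hdre]
    have := re_eq_neg_abs h7
    rwa [habsd] at this
  -- deduce c := q^2*q'
  have hne : -((P*Q^2 : ℝ) : ℂ) ≠ 0 := by
    simp only [neg_ne_zero, Complex.ofReal_ne_zero]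
    positivity
  have hc_eq : q^2*q' = -((P^2*Q : ℝ) : ℂ) := by
    apply mul_right_cancel₀ hne
    have hmul : (q^2*q') * (q*q'^2) = (q^3)*(q'^3) := by ring
    rw [hcube0, hcube1, hd_eq] at hmul
    rw [hmul]
    push_cast
    ring
  -- contradiction from e001
  have hconjc : (starRingEnd ℂ) q * (starRingEnd ℂ) q * (starRingEnd ℂ) q' =
      (starRingEnd ℂ) (q^2*q') := by rw [map_mul, map_pow]; ring
  rw [show q*q*q' = q^2*q' by ring] at e001
  rw [hconjc, hc_eq] at e001
  simp only [map_neg, Complex.conj_ofReal] at e001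
  have : (1:ℝ) = 0 := by
    have h' : ((1:ℝ):ℂ) = ((P*P*Q - P^2*Q + (P*P*Q - P^2*Q) : ℝ):ℂ) := by
      push_cast; push_cast at e001; linear_combination e001
    have := Complex.ofReal_inj.mp h'
    linarith [this]
  norm_num at this
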